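/- Let k be a nonarchimedean local field, n ≥ 2, and let C = diag(a_1, …, a_n) ∈ GL_n(k) be a diagonal matrix with det C = 1 and a_i ≠ a_j for i ≠ j. Fix ε with 0 < ε < 1 and ε < (1/2)·min_{i≠j} |a_i − a_j|, and set θ(n, ε, C) := min{10⁻²·min_{i≠j} |a_i − a_j|, ε^n · ‖C‖^{1 − 2n² − n}}. Then for every C' ∈ GL_n(k) with ‖C − C'‖ < θ(n, ε, C) there exist w ∈ GL_n(k) and a'_1, …, a'_n ∈ k such that C' = w·diag(a'_1, …, a'_n)·w⁻¹, ‖w − I‖ < ε, ‖w⁻¹ − I‖ < ε, and max_{1≤j≤n} |a'_j − a_j| < ε. -/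

import Mathlib

noncomputable section

/-- The sup-of-entries norm of a square matrix over a normed field. -/
def matSup {k : Type*} [NormedField k] {n : ℕ} (A : Matrix (Fin n) (Fin n) k) : ℝ :=
  ⨆ i, ⨆ j, ‖A i j‖

section Aux

attribute [local instance] Matrix.normedAddCommGroup Matrix.normedSpace

lemma matSup_eq_norm {k : Type*} [NormedField k] {n : ℕ} (hn : 0 < n)
    (A : Matrix (Fin n) (Fin n) k) : matSup A = ‖A‖ := by
  haveI : Nonempty (Fin n) := ⟨⟨0, hn⟩⟩
  have key : ∀ i j, ‖A i j‖ ≤ matSup A := by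
    intro i j
    have h1 : ‖A i j‖ ≤ ⨆ j', ‖A i j'‖ :=
      le_ciSup (Set.Finite.bddAbove (Set.finite_range fun j' => ‖A i j'‖)) j
    have h2 : (⨆ j', ‖A i j'‖) ≤ matSup A :=
      le_ciSup (f := fun i => ⨆ j', ‖A i j'‖)
        (Set.Finite.bddAbove (Set.finite_range fun i => ⨆ j', ‖A i j'‖)) i
    exact h1.trans h2
  have h0 : 0 ≤ matSup A :=
    le_trans (norm_nonneg _) (key (Classical.arbitrary _) (Classical.arbitrary _))
  refine le_antisymm (ciSup_le fun i => ciSup_le fun j => A.norm_entry_le_entrywise_sup_norm) ?_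
  exact (Matrix.norm_le_iff h0).2 key

set_option maxHeartbeats 1000000 in
/-- perturbation of a diagonal matrix with distinct eigenvalues over a
nonarchimedean local field: any invertible matrix `C'` with `‖C − C'‖ < θ(n, ε, C)` is
conjugate, by some `w` with `‖w^{±1} − I‖ < ε`, to a diagonal matrix whose entries are
`ε`-close to those of `C`. -/
theorem stmt13 {k : Type*} [NormedField k] [CompleteSpace k] [LocallyCompactSpace k]
    (hna : IsNonarchimedean fun x : k => ‖x‖) (hnt : ∃ x : k, 1 < ‖x‖)
    (n : ℕ) (hn : 2 ≤ n) (a : Fin n → k) (C : Matrix (Fin n) (Fin n) k)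
    (hC : C = Matrix.diagonal a) (hdet : C.det = 1) (hinj : Function.Injective a)
    (ε : ℝ) (hε0 : 0 < ε) (hε1 : ε < 1)
    (hεsep : ∀ i j : Fin n, i ≠ j → ε < (1/2) * ‖a i - a j‖)
    (θ : ℝ)
    (hθ : θ = min ((10:ℝ)⁻¹^2 * sInf {r : ℝ | ∃ i j : Fin n, i ≠ j ∧ r = ‖a i - a j‖})
        (ε ^ n * matSup C ^ ((1:ℤ) - 2 * (n:ℤ)^2 - (n:ℤ))))
    (C' : (Matrix (Fin n) (Fin n) k)ˣ) (hC' : matSup ((C' : Matrix (Fin n) (Fin n) k) - C) < θ) :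
    ∃ (w : (Matrix (Fin n) (Fin n) k)ˣ) (a' : Fin n → k),
      (C' : Matrix (Fin n) (Fin n) k) =
          (w : Matrix (Fin n) (Fin n) k) * Matrix.diagonal a' * ((w⁻¹ : _) : Matrix (Fin n) (Fin n) k) ∧
      matSup ((w : Matrix (Fin n) (Fin n) k) - 1) < ε ∧
      matSup (((w⁻¹ : _) : Matrix (Fin n) (Fin n) k) - 1) < ε ∧
      ∀ j : Fin n, ‖a' j - a j‖ < ε := by
  classical
  haveI : IsUltrametricDist k := IsUltrametricDist.isUltrametricDist_of_isNonarchimedean_norm hna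
  letI : NontriviallyNormedField k := { ‹NormedField k› with non_trivial := hnt }
  haveI : Nonempty (Fin n) := ⟨⟨0, by omega⟩⟩
  haveI : CompleteSpace (Matrix (Fin n) (Fin n) k) := FiniteDimensional.complete k _
  have hms : ∀ A : Matrix (Fin n) (Fin n) k, matSup A = ‖A‖ := matSup_eq_norm (by omega)
  set E : Matrix (Fin n) (Fin n) k := (C' : Matrix (Fin n) (Fin n) k) - C with hE
  have hCE : (C' : Matrix (Fin n) (Fin n) k) = C + E := by rw [hE]; abel
  clear_value E
  have hEθ : ‖E‖ < θ := by rw [← hms]; exact hC'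
  have hE0 : (0:ℝ) ≤ ‖E‖ := norm_nonneg _
  have hθ0 : 0 < θ := lt_of_le_of_lt hE0 hEθ
  -- `matSup C ≥ 1` since `det C = 1`
  have hC1 : 1 ≤ matSup C := by
    have hprod : ∏ i, ‖a i‖ = 1 := by
      have h1 : ∏ i, a i = 1 := by rwa [hC, Matrix.det_diagonal] at hdet
      calc ∏ i, ‖a i‖ = ‖∏ i, a i‖ := (norm_prod _ _).symm
        _ = 1 := by rw [h1, norm_one]
    by_contra hlt
    push_neg at hlt
    have hbd : ∀ i, ‖a i‖ ≤ matSup C := by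
      intro i
      have h2 : ‖C i i‖ ≤ matSup C := by rw [hms]; exact C.norm_entry_le_entrywise_sup_norm
      have h3 : C i i = a i := by rw [hC]; exact Matrix.diagonal_apply_eq a i
      rwa [h3] at h2
    have h0C : 0 ≤ matSup C := le_trans (norm_nonneg _) (hbd (Classical.arbitrary _))
    have h4 : ∏ i, ‖a i‖ ≤ ∏ _i : Fin n, matSup C :=
      Finset.prod_le_prod (fun i _ => norm_nonneg _) (fun i _ => hbd i)
    rw [Finset.prod_const, Finset.card_univ, Fintype.card_fin] at h4
    have h5 : matSup C ^ n < 1 := pow_lt_one₀ h0C hlt (by omega)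
    rw [hprod] at h4
    linarith
  -- θ ≤ ε^2
  have hθε2 : θ ≤ ε ^ 2 := by
    refine le_trans (hθ ▸ min_le_right _ _) ?_
    have h1 : matSup C ^ ((1:ℤ) - 2 * (n:ℤ)^2 - (n:ℤ)) ≤ 1 := by
      apply zpow_le_one_of_nonpos₀ hC1
      have h2 : (2:ℤ) ≤ (n:ℤ) := by exact_mod_cast hn
      nlinarith
    have h2 : ε ^ n ≤ ε ^ 2 := pow_le_pow_of_le_one hε0.le hε1.le hn
    calc ε ^ n * matSup C ^ ((1:ℤ) - 2 * (n:ℤ)^2 - (n:ℤ)) ≤ ε ^ n * 1 :=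
          mul_le_mul_of_nonneg_left h1 (pow_nonneg hε0.le n)
      _ = ε ^ n := mul_one _
      _ ≤ ε ^ 2 := h2
  have hEε2 : ‖E‖ < ε ^ 2 := lt_of_lt_of_le hEθ hθε2
  have hε21 : ε ^ 2 < ε := by nlinarith
  have hEε : ‖E‖ ≤ ε := by nlinarith
  -- θ ≤ (1/100) * ‖a i - a j‖
  have hθm : ∀ i j : Fin n, i ≠ j → θ ≤ (1/100) * ‖a i - a j‖ := by
    intro i j hij
    have hmem : ‖a i - a j‖ ∈ {r : ℝ | ∃ i j : Fin n, i ≠ j ∧ r = ‖a i - a j‖} := ⟨i, j, hij, rfl⟩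
    have hbdd : BddBelow {r : ℝ | ∃ i j : Fin n, i ≠ j ∧ r = ‖a i - a j‖} :=
      ⟨0, fun r ⟨i', j', _, hr⟩ => hr ▸ norm_nonneg _⟩
    have h4 := csInf_le hbdd hmem
    calc θ ≤ (10:ℝ)⁻¹^2 * sInf {r : ℝ | ∃ i j : Fin n, i ≠ j ∧ r = ‖a i - a j‖} :=
          hθ ▸ min_le_left _ _
      _ ≤ (10:ℝ)⁻¹^2 * ‖a i - a j‖ := mul_le_mul_of_nonneg_left h4 (by norm_num)
      _ = (1/100) * ‖a i - a j‖ := by norm_num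
  have hsep : ∀ i j : Fin n, i ≠ j → 2 * ε < ‖a i - a j‖ := by
    intro i j hij; have := hεsep i j hij; linarith
  -- entry bounds
  have entry_le : ∀ (A : Matrix (Fin n) (Fin n) k) (i j : Fin n), ‖A i j‖ ≤ ‖A‖ := fun A i j =>
    A.norm_entry_le_entrywise_sup_norm
  have mulE : ∀ (A B : Matrix (Fin n) (Fin n) k) (i j : Fin n), ‖(A * B) i j‖ ≤ ‖A‖ * ‖B‖ := by
    intro A B i j
    rw [Matrix.mul_apply]
    refine IsUltrametricDist.norm_sum_le_of_forall_le_of_nonneg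
      (mul_nonneg (norm_nonneg _) (norm_nonneg _)) (fun l _ => ?_)
    rw [norm_mul]
    exact mul_le_mul (entry_le _ _ _) (entry_le _ _ _) (norm_nonneg _) (norm_nonneg _)
  have mulM : ∀ A B : Matrix (Fin n) (Fin n) k, ‖A * B‖ ≤ ‖A‖ * ‖B‖ := fun A B =>
    (Matrix.norm_le_iff (mul_nonneg (norm_nonneg _) (norm_nonneg _))).2 (mulE A B)
  -- the fixed point map
  set dd : Matrix (Fin n) (Fin n) k → Fin n → k := fun u j => (E + E * u) j j with hdd
  set F : Matrix (Fin n) (Fin n) k → Matrix (Fin n) (Fin n) k := fun u => Matrix.of fun i j =>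
    if i = j then 0 else (E + E * u) i j / (a j - a i + dd u j) with hF
  clear_value dd F
  set B : Set (Matrix (Fin n) (Fin n) k) := Metric.closedBall 0 (ε/2) with hB
  clear_value B
  have hmemB : ∀ u : Matrix (Fin n) (Fin n) k, u ∈ B ↔ ‖u‖ ≤ ε/2 := by
    intro u; rw [hB, Metric.mem_closedBall, dist_zero_right]
  have hhalf : (0:ℝ) < ε / 2 := by linarith
  have hε2le1 : ε / 2 ≤ 1 := by linarith
  -- numerator bound
  have hnum : ∀ u : Matrix (Fin n) (Fin n) k, ‖u‖ ≤ 1 → ∀ i j : Fin n, ‖(E + E * u) i j‖ ≤ ‖E‖ := by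
    intro u hu i j
    have h1 : ‖(E * u) i j‖ ≤ ‖E‖ := by
      refine le_trans (mulE E u i j) ?_
      calc ‖E‖ * ‖u‖ ≤ ‖E‖ * 1 := mul_le_mul_of_nonneg_left hu hE0
        _ = ‖E‖ := mul_one _
    calc ‖(E + E * u) i j‖ = ‖E i j + (E * u) i j‖ := by rw [Matrix.add_apply]
      _ ≤ max ‖E i j‖ ‖(E * u) i j‖ := IsUltrametricDist.norm_add_le_max _ _
      _ ≤ ‖E‖ := max_le (entry_le _ _ _) h1
  -- numerator difference
  have hnumdiff : ∀ u u' : Matrix (Fin n) (Fin n) k, ∀ i j : Fin n,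
      (E + E * u) i j - (E + E * u') i j = (E * (u - u')) i j := by
    intro u u' i j
    rw [Matrix.mul_sub, Matrix.sub_apply, Matrix.add_apply, Matrix.add_apply]
    ring
  -- denominator bound
  have hden : ∀ u : Matrix (Fin n) (Fin n) k, ‖u‖ ≤ 1 → ∀ i j : Fin n, i ≠ j → 2 * ε < ‖a j - a i + dd u j‖ := by
    intro u hu i j hij
    have hd : ‖dd u j‖ ≤ ‖E‖ := by rw [hdd]; exact hnum u hu j j
    have hji : j ≠ i := hij.symm
    have hm : θ ≤ (1/100) * ‖a j - a i‖ := hθm j i hji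
    have hpos : 0 < ‖a j - a i‖ := by nlinarith
    have hlt : ‖dd u j‖ < ‖a j - a i‖ := by nlinarith
    have hne : ‖a j - a i‖ ≠ ‖dd u j‖ := ne_of_gt hlt
    have heq : ‖a j - a i + dd u j‖ = max ‖a j - a i‖ ‖dd u j‖ :=
      IsUltrametricDist.norm_add_eq_max_of_norm_ne_norm hne
    rw [heq, max_eq_left hlt.le]
    exact hsep j i hji
  -- F maps B into B
  have hFnorm : ∀ u : Matrix (Fin n) (Fin n) k, u ∈ B → ‖F u‖ ≤ ‖E‖ / (2 * ε) := by
    intro u hu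
    have hu1 : ‖u‖ ≤ 1 := le_trans ((hmemB u).1 hu) hε2le1
    refine (Matrix.norm_le_iff (div_nonneg hE0 (by linarith))).2 (fun i j => ?_)
    by_cases hij : i = j
    · simp only [hF, Matrix.of_apply, hij, eq_self_iff_true, if_true, norm_zero]
      refine div_nonneg hE0 ?_
      linarith
    · have h1 : (F u) i j = (E + E * u) i j / (a j - a i + dd u j) := by
        simp only [hF, Matrix.of_apply, if_neg hij]
      rw [h1, norm_div]
      exact div_le_div₀ hE0 (hnum u hu1 i j) (by linarith) (hden u hu1 i j hij).le
  have hEd : ‖E‖ / (2 * ε) < ε / 2 := by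
    rw [div_lt_iff₀ (by linarith : (0:ℝ) < 2 * ε)]
    nlinarith
  have hmaps : Set.MapsTo F B B := by
    intro u hu
    rw [hmemB]
    exact le_trans (hFnorm u hu) hEd.le
  -- contraction
  have hlip : ∀ u ∈ B, ∀ u' ∈ B, ‖F u - F u'‖ ≤ (1/2) * ‖u - u'‖ := by
    intro u hu u' hu'
    have hu1 : ‖u‖ ≤ 1 := le_trans ((hmemB u).1 hu) hε2le1
    have hu'1 : ‖u'‖ ≤ 1 := le_trans ((hmemB u').1 hu') hε2le1
    set δ := ‖u - u'‖ with hδ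
    have hδ0 : 0 ≤ δ := by rw [hδ]; exact norm_nonneg _
    clear_value δ
    refine (Matrix.norm_le_iff (by linarith)).2 (fun i j => ?_)
    by_cases hij : i = j
    · simp only [Matrix.sub_apply, hF, Matrix.of_apply, hij, eq_self_iff_true, if_true,
        sub_self, norm_zero]
      exact mul_nonneg (by norm_num) hδ0
    · have hFu : (F u) i j = (E + E * u) i j / (a j - a i + dd u j) := by
        simp only [hF, Matrix.of_apply, if_neg hij]
      have hFu' : (F u') i j = (E + E * u') i j / (a j - a i + dd u' j) := by
        simp only [hF, Matrix.of_apply, if_neg hij]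
      set A1 := (E + E * u) i j with hA1
      set A2 := (E + E * u') i j with hA2
      set B1 := a j - a i + dd u j with hB1def
      set B2 := a j - a i + dd u' j with hB2def
      clear_value A1 A2 B1 B2
      have hB1 : 2 * ε < ‖B1‖ := by rw [hB1def]; exact hden u hu1 i j hij
      have hB2 : 2 * ε < ‖B2‖ := by rw [hB2def]; exact hden u' hu'1 i j hij
      have hB1' : (0:ℝ) < ‖B1‖ := by linarith
      have hB2' : (0:ℝ) < ‖B2‖ := by linarith
      have hB1ne : B1 ≠ 0 := fun h => by rw [h, norm_zero] at hB1'; exact lt_irrefl _ hB1'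
      have hB2ne : B2 ≠ 0 := fun h => by rw [h, norm_zero] at hB2'; exact lt_irrefl _ hB2'
      have hA12 : ‖A1 - A2‖ ≤ ‖E‖ * δ := by
        rw [hA1, hA2, hnumdiff u u' i j, hδ]
        exact mulE _ _ _ _
      have hA2n : ‖A2‖ ≤ ‖E‖ := by rw [hA2]; exact hnum u' hu'1 i j
      have hB12 : ‖B2 - B1‖ ≤ ‖E‖ * δ := by
        have h1 : B2 - B1 = (E * (u' - u)) j j := by
          rw [hB2def, hB1def]
          simp only [hdd]
          rw [← hnumdiff u' u j j]
          ring
        rw [h1]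
        refine le_trans (mulE _ _ _ _) ?_
        rw [norm_sub_rev u' u, ← hδ]
      have hiden : A1 / B1 - A2 / B2 = ((A1 - A2) * B2 + A2 * (B2 - B1)) / (B1 * B2) := by
        field_simp
        ring
      rw [Matrix.sub_apply, hFu, hFu', hiden, norm_div, norm_mul]
      rw [div_le_iff₀ (by positivity)]
      refine le_trans (IsUltrametricDist.norm_add_le_max _ _) (max_le ?_ ?_)
      · rw [norm_mul]
        have s1 : ‖A1 - A2‖ ≤ ε * δ :=
          le_trans hA12 (mul_le_mul_of_nonneg_right hEε hδ0)
        have s2 : ε * δ ≤ (1/2 * ‖B1‖) * δ :=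
          mul_le_mul_of_nonneg_right (by linarith) hδ0
        calc ‖A1 - A2‖ * ‖B2‖ ≤ ((1/2 * ‖B1‖) * δ) * ‖B2‖ :=
              mul_le_mul_of_nonneg_right (s1.trans s2) hB2'.le
          _ = 1/2 * δ * (‖B1‖ * ‖B2‖) := by ring
      · rw [norm_mul]
        have t1 : ‖A2‖ ≤ 1/2 * ‖B1‖ := by linarith
        have t2 : ‖B2 - B1‖ ≤ ‖B2‖ * δ := by
          refine le_trans hB12 (mul_le_mul_of_nonneg_right (by linarith) hδ0)
        calc ‖A2‖ * ‖B2 - B1‖ ≤ (1/2 * ‖B1‖) * (‖B2‖ * δ) :=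
              mul_le_mul t1 t2 (norm_nonneg _) (by linarith)
          _ = 1/2 * δ * (‖B1‖ * ‖B2‖) := by ring
  -- fixed point
  have hcompl : IsComplete B := by 
    rw [hB]
    exact @IsClosed.isComplete _ _ (FiniteDimensional.complete k _) _ Metric.isClosed_closedBall
  have hcontr : ContractingWith (1/2 : NNReal) (hmaps.restrict F B B) := by
    constructor
    · rw [← NNReal.coe_lt_coe]
      norm_num
    · refine LipschitzWith.of_dist_le_mul fun x y => ?_
      have h1 := hlip x.1 x.2 y.1 y.2
      rw [Subtype.dist_eq, Subtype.dist_eq]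
      rw [Set.MapsTo.val_restrict_apply, Set.MapsTo.val_restrict_apply]
      rw [dist_eq_norm, dist_eq_norm]
      refine le_trans h1 ?_
      apply mul_le_mul_of_nonneg_right _ (norm_nonneg _)
      norm_num
  have h0B : (0:Matrix (Fin n) (Fin n) k) ∈ B := by rw [hmemB]; rw [norm_zero]; linarith
  obtain ⟨u, huB, hufix, -, -⟩ :=
    hcontr.exists_fixedPoint' hcompl hmaps h0B (edist_ne_top _ _)
  have huu : ‖u‖ ≤ ε/2 := (hmemB u).1 huB
  have hu1 : ‖u‖ ≤ 1 := le_trans huu hε2le1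
  have hudiag : ∀ i : Fin n, u i i = 0 := by
    intro i
    conv_lhs => rw [← hufix]
    simp [hF]
  have hu_entry : ∀ i j : Fin n, i ≠ j →
      u i j = (E + E * u) i j / (a j - a i + dd u j) := by
    intro i j hij
    conv_lhs => rw [← hufix]
    simp only [hF, Matrix.of_apply, if_neg hij]
  have huoff : ∀ i j : Fin n, i ≠ j →
      u i j * (a j - a i + dd u j) = (E + E * u) i j := by
    intro i j hij
    have hdpos : (0:ℝ) < ‖a j - a i + dd u j‖ := lt_trans (by linarith) (hden u hu1 i j hij)
    have hd0 : a j - a i + dd u j ≠ 0 := fun h => by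
      rw [h, norm_zero] at hdpos; exact lt_irrefl _ hdpos
    rw [hu_entry i j hij]
    exact div_mul_cancel₀ _ hd0
  set a' : Fin n → k := fun j => a j + dd u j with ha'
  clear_value a'
  -- conjugation identity
  have key : (1 + u) * Matrix.diagonal a' = (C' : Matrix (Fin n) (Fin n) k) * (1 + u) := by
    rw [hCE, hC]
    ext i j
    simp only [Matrix.add_mul, Matrix.mul_add, Matrix.mul_one, Matrix.one_mul,
      Matrix.mul_diagonal, Matrix.diagonal_mul, Matrix.add_apply, Matrix.diagonal_apply,
      Matrix.one_apply]
    by_cases hij : i = j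
    · subst hij
      simp only [eq_self_iff_true, if_true]
      have hd : a' i = a i + (E i i + (E * u) i i) := by
        rw [ha']
        simp only [hdd]
        rw [Matrix.add_apply]
      rw [hd, hudiag i]
      ring
    · simp only [if_neg hij]
      have h1 : u i j * (a j - a i + dd u j) = E i j + (E * u) i j := by
        rw [huoff i j hij, Matrix.add_apply]
      have hd : a' j = a j + dd u j := by rw [ha']
      rw [hd]
      linear_combination h1
  -- inverse via a second fixed point
  set G : Matrix (Fin n) (Fin n) k → Matrix (Fin n) (Fin n) k := fun v => -(u + u * v) with hG
  clear_value G
  have hGmaps : Set.MapsTo G B B := by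
    intro v hv
    rw [hmemB]
    have hv2 : ‖v‖ ≤ ε/2 := (hmemB v).1 hv
    refine (Matrix.norm_le_iff (by linarith)).2 (fun i j => ?_)
    have h1 : (G v) i j = -(u i j + (u * v) i j) := by
      rw [hG]
      simp only [Matrix.neg_apply, Matrix.add_apply]
    rw [h1, norm_neg]
    refine le_trans (IsUltrametricDist.norm_add_le_max _ _) (max_le ?_ ?_)
    · exact le_trans (entry_le u i j) huu
    · refine le_trans (mulE u v i j) ?_
      calc ‖u‖ * ‖v‖ ≤ (ε/2) * 1 := by
            refine mul_le_mul huu (le_trans hv2 hε2le1) (norm_nonneg _) (by linarith)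
        _ = ε/2 := mul_one _
  have hGlip : ∀ v ∈ B, ∀ v' ∈ B, ‖G v - G v'‖ ≤ (1/2) * ‖v - v'‖ := by
    intro v _ v' _
    have h1 : G v - G v' = u * (v' - v) := by
      rw [hG]
      simp only [Matrix.mul_sub]
      abel
    rw [h1]
    refine le_trans (mulM u (v' - v)) ?_
    rw [norm_sub_rev v' v]
    refine mul_le_mul_of_nonneg_right (le_trans huu (by linarith)) (norm_nonneg _)
  have hGcontr : ContractingWith (1/2 : NNReal) (hGmaps.restrict G B B) := by
    constructor
    · rw [← NNReal.coe_lt_coe]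
      norm_num
    · refine LipschitzWith.of_dist_le_mul fun x y => ?_
      have h1 := hGlip x.1 x.2 y.1 y.2
      rw [Subtype.dist_eq, Subtype.dist_eq]
      rw [Set.MapsTo.val_restrict_apply, Set.MapsTo.val_restrict_apply]
      rw [dist_eq_norm, dist_eq_norm]
      refine le_trans h1 ?_
      apply mul_le_mul_of_nonneg_right _ (norm_nonneg _)
      norm_num
  obtain ⟨v, hvB, hvfix, -, -⟩ :=
    hGcontr.exists_fixedPoint' hcompl hGmaps h0B (edist_ne_top _ _)
  have hvv : ‖v‖ ≤ ε/2 := (hmemB v).1 hvB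
  have hzero : u + v + u * v = 0 := by
    have h2 : v = -(u + u * v) := by
      conv_lhs => rw [← hvfix, hG]
    nth_rewrite 1 [h2]
    abel
  have hinv : (1 + u) * (1 + v) = 1 := by
    have expand : (1 + u) * (1 + v) = 1 + (u + v + u * v) := by noncomm_ring
    rw [expand, hzero, add_zero]
  have hinv2 : (1 + v) * (1 + u) = 1 := mul_eq_one_comm.mp hinv
  refine ⟨⟨1 + u, 1 + v, hinv, hinv2⟩, a', ?_, ?_, ?_, ?_⟩
  · show (C' : Matrix (Fin n) (Fin n) k) = (1 + u) * Matrix.diagonal a' * (1 + v)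
    calc (C' : Matrix (Fin n) (Fin n) k)
        = ((C' : Matrix (Fin n) (Fin n) k) * (1 + u)) * (1 + v) := by
          rw [mul_assoc, hinv, mul_one]
      _ = ((1 + u) * Matrix.diagonal a') * (1 + v) := by rw [← key]
  · show matSup ((1 + u) - 1) < ε
    rw [hms]
    have h1 : (1 + u) - (1 : Matrix (Fin n) (Fin n) k) = u := by abel
    rw [h1]
    linarith
  · show matSup ((1 + v) - 1) < ε
    rw [hms]
    have h1 : (1 + v) - (1 : Matrix (Fin n) (Fin n) k) = v := by abel
    rw [h1]
    linarith
  · intro j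
    have h1 : a' j - a j = dd u j := by rw [ha']; ring
    rw [h1]
    have h2 : ‖dd u j‖ ≤ ‖E‖ := by rw [hdd]; exact hnum u hu1 j j
    linarith

end Aux
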